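/- Vitali-type partial covering lemma: Let (Y,d) be a metric space, μ a finite Borel measure on Y, F > 0 a constant, and k a positive integer. Suppose r₀ : Y → [0,∞) is a function such that for μ-almost every y ∈ Y: r₀(y) > 0, μ(B(y, r₀(y))) = F·r₀(y)^k, and μ(B(y, 5·r₀(y))) < 5^k·F·r₀(y)^k. Then there exist finitely many points y₁, …, y_N ∈ Y with r₀(y_i) > 0, such that the closed balls B(y_i, 2·r₀(y_i)) are pairwise disjoint, and Σ_{i=1}^N μ(B(y_i, r₀(y_i))) ≥ μ(Y)/5^k. -/

import Mathlib

open Set Metric MeasureTheory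

theorem stmt_4 {Y : Type*} [MetricSpace Y] [MeasurableSpace Y] [BorelSpace Y]
    (μ : Measure Y) [IsFiniteMeasure μ]
    (F : ℝ) (hF : 0 < F) (k : ℕ) (hk : 1 ≤ k) (r₀ : Y → ℝ)
    (h : ∀ᵐ y ∂μ, 0 < r₀ y ∧
      μ (Metric.closedBall y (r₀ y)) = ENNReal.ofReal (F * r₀ y ^ k) ∧
      μ (Metric.closedBall y (5 * r₀ y)) < ENNReal.ofReal (5 ^ k * F * r₀ y ^ k)) :
    ∃ (N : ℕ) (y : Fin N → Y), (∀ i, 0 < r₀ (y i)) ∧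
      (∀ i j, i ≠ j → Disjoint (Metric.closedBall (y i) (2 * r₀ (y i)))
        (Metric.closedBall (y j) (2 * r₀ (y j)))) ∧
      μ Set.univ / 5 ^ k ≤ ∑ i, μ (Metric.closedBall (y i) (r₀ (y i))) := by
  classical
  by_cases hμ0 : μ Set.univ = 0
  · exact ⟨0, Fin.elim0, fun i => i.elim0, fun i => i.elim0, by simp [hμ0]⟩
  set G : Set Y := {y | 0 < r₀ y ∧
      μ (Metric.closedBall y (r₀ y)) = ENNReal.ofReal (F * r₀ y ^ k) ∧
      μ (Metric.closedBall y (5 * r₀ y)) < ENNReal.ofReal (5 ^ k * F * r₀ y ^ k)} with hGdef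
  have hGae : μ Gᶜ = 0 := h
  have hGfull : μ G = μ Set.univ := by
    apply le_antisymm (measure_mono (subset_univ _))
    calc μ Set.univ = μ (G ∪ Gᶜ) := by rw [union_compl_self]
      _ ≤ μ G + μ Gᶜ := measure_union_le _ _
      _ = μ G := by rw [hGae, add_zero]
  -- radius bound
  set R : ℝ := max 1 ((μ Set.univ).toReal / F) with hRdef
  have hRle : ∀ a ∈ G, r₀ a ≤ R := by
    intro a ha
    have h1 : ENNReal.ofReal (F * r₀ a ^ k) ≤ μ Set.univ := by
      rw [← ha.2.1]; exact measure_mono (subset_univ _)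
    have h2 : F * r₀ a ^ k ≤ (μ Set.univ).toReal :=
      (ENNReal.ofReal_le_iff_le_toReal (measure_ne_top μ _)).mp h1
    have h3 : r₀ a ^ k ≤ (μ Set.univ).toReal / F := by
      rw [le_div_iff₀ hF, mul_comm]; exact h2
    rcases le_or_gt (r₀ a) 1 with hle | hgt
    · exact hle.trans (le_max_left _ _)
    · have : r₀ a ≤ r₀ a ^ k := le_self_pow₀ hgt.le (by omega)
      exact (this.trans h3).trans (le_max_right _ _)
  obtain ⟨u, huG, hdisj, hcov⟩ :=
    Vitali.exists_disjoint_subfamily_covering_enlargement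
      (fun y => Metric.closedBall y (2 * r₀ y)) G r₀ (3/2) (by norm_num)
      (fun a ha => ha.1.le) R hRle
      (fun a ha => ⟨a, Metric.mem_closedBall_self (by linarith [ha.1])⟩)
  -- covering by 5-balls
  have hcov5 : G ⊆ ⋃ b ∈ u, Metric.closedBall b (5 * r₀ b) := by
    intro a ha
    obtain ⟨b, hbu, ⟨z, hz1, hz2⟩, hle⟩ := hcov a ha
    refine mem_biUnion hbu ?_
    have hd1 : dist z a ≤ 2 * r₀ a := hz1
    have hd2 : dist z b ≤ 2 * r₀ b := hz2
    have := dist_triangle a z b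
    rw [Metric.mem_closedBall]
    rw [dist_comm] at hd1
    linarith
  -- positivity of ball measures
  have hpos : ∀ b ∈ u, 0 < μ (Metric.closedBall b (r₀ b)) := by
    intro b hb
    have hbG := huG hb
    rw [hbG.2.1]
    exact ENNReal.ofReal_pos.mpr (mul_pos hF (pow_pos hbG.1 k))
  -- countability of u
  have hcount : u.Countable := by
    have hc := MeasureTheory.Measure.countable_meas_pos_of_disjoint_iUnion (μ := μ)
      (As := fun b : u => Metric.closedBall (b : Y) (2 * r₀ b))
      (fun b => measurableSet_closedBall)
      (fun b₁ b₂ hne => hdisj b₁.2 b₂.2 (Subtype.coe_injective.ne hne))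
    have hall : {b : u | 0 < μ (Metric.closedBall (b : Y) (2 * r₀ b))} = Set.univ := by
      apply eq_univ_of_forall
      intro b
      refine lt_of_lt_of_le (hpos b b.2) (measure_mono (Metric.closedBall_subset_closedBall ?_))
      have := (huG b.2).1; linarith
    rw [hall] at hc
    rw [← Set.countable_coe_iff]
    exact Set.countable_univ_iff.mp hc
  -- tsum bound
  have hS_le : ∑' (b : u), μ (Metric.closedBall (b : Y) (r₀ b)) ≤ μ Set.univ := by
    calc ∑' (b : u), μ (Metric.closedBall (b : Y) (r₀ b))
        ≤ ∑' (b : u), μ (Metric.closedBall (b : Y) (2 * r₀ b)) := by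
          refine ENNReal.tsum_le_tsum fun b => measure_mono
            (Metric.closedBall_subset_closedBall ?_)
          have := (huG b.2).1; linarith
      _ = μ (⋃ b ∈ u, Metric.closedBall b (2 * r₀ b)) :=
          (measure_biUnion hcount hdisj (fun b _ => measurableSet_closedBall)).symm
      _ ≤ μ Set.univ := measure_mono (subset_univ _)
  have hS_ne_top : ∑' (b : u), μ (Metric.closedBall (b : Y) (r₀ b)) ≠ ⊤ :=
    (hS_le.trans_lt (measure_lt_top μ _)).ne
  -- per-ball strict inequality
  have hterm : ∀ b : u, μ (Metric.closedBall (b : Y) (5 * r₀ b))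
      < 5 ^ k * μ (Metric.closedBall (b : Y) (r₀ b)) := by
    intro b
    have hbG := huG b.2
    rw [hbG.2.1]
    refine hbG.2.2.trans_le (le_of_eq ?_)
    rw [mul_assoc, ENNReal.ofReal_mul (by positivity : (0:ℝ) ≤ 5 ^ k)]
    congr 1
    rw [ENNReal.ofReal_pow (by norm_num : (0:ℝ) ≤ 5)]
    norm_num
  -- u nonempty
  have hGne : G.Nonempty := by
    apply nonempty_of_measure_ne_zero (μ := μ); rw [hGfull]; exact hμ0
  obtain ⟨a₀, ha₀⟩ := hGne
  obtain ⟨b₀, hb₀u, -, -⟩ := hcov a₀ ha₀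
  -- main strict inequality
  have hmain : μ Set.univ < 5 ^ k * ∑' (b : u), μ (Metric.closedBall (b : Y) (r₀ b)) := by
    calc μ Set.univ = μ G := hGfull.symm
      _ ≤ μ (⋃ b ∈ u, Metric.closedBall b (5 * r₀ b)) := measure_mono hcov5
      _ ≤ ∑' (b : u), μ (Metric.closedBall (b : Y) (5 * r₀ b)) :=
          measure_biUnion_le μ hcount _
      _ < ∑' (b : u), 5 ^ k * μ (Metric.closedBall (b : Y) (r₀ b)) := by
          refine ENNReal.tsum_lt_tsum (i := ⟨b₀, hb₀u⟩) ?_ (fun b => (hterm b).le)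
            (hterm _)
          refine ne_top_of_le_ne_top ?_ (ENNReal.tsum_le_tsum fun b => (hterm b).le)
          rw [ENNReal.tsum_mul_left]
          exact ENNReal.mul_ne_top (by simp) hS_ne_top
      _ = 5 ^ k * ∑' (b : u), μ (Metric.closedBall (b : Y) (r₀ b)) :=
          ENNReal.tsum_mul_left
  have hdiv : μ Set.univ / 5 ^ k < ∑' (b : u), μ (Metric.closedBall (b : Y) (r₀ b)) := by
    rw [ENNReal.div_lt_iff (Or.inl (by simp)) (Or.inl (by simp))]
    rw [mul_comm] at hmain
    exact hmain
  -- extract a finite subfamily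
  rw [ENNReal.tsum_eq_iSup_sum, lt_iSup_iff] at hdiv
  obtain ⟨s, hs⟩ := hdiv
  set t : Finset Y := s.image Subtype.val with htdef
  have htu : ∀ x ∈ t, x ∈ u := by
    intro x hx
    obtain ⟨b, -, rfl⟩ := Finset.mem_image.mp hx
    exact b.2
  have hts : μ Set.univ / 5 ^ k ≤ ∑ x ∈ t, μ (Metric.closedBall x (r₀ x)) := by
    rw [htdef, Finset.sum_image (fun b _ b' _ h => Subtype.coe_injective h)]
    exact hs.le
  refine ⟨t.card, fun i => (t.equivFin.symm i : Y), ?_, ?_, ?_⟩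
  · intro i
    exact (huG (htu _ (t.equivFin.symm i).2)).1
  · intro i j hij
    refine hdisj (htu _ (t.equivFin.symm i).2) (htu _ (t.equivFin.symm j).2) ?_
    intro hval
    exact hij (t.equivFin.symm.injective (Subtype.coe_injective hval))
  · refine hts.trans (le_of_eq ?_)
    rw [← Finset.sum_coe_sort t (fun x => μ (Metric.closedBall x (r₀ x)))]
    exact (Equiv.sum_comp t.equivFin.symm
      (fun x : t => μ (Metric.closedBall (x : Y) (r₀ x)))).symm
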